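/- Let t₀ ≠ 0 and let φ(t₀) = Id_s ⊕ θ(a₁t₀) ⊕ ⋯ ⊕ θ(aₙt₀) be block diagonal with an s×s identity block and rotation blocks, with all a_i > 0. If φ(t₀) is conjugate over ℝ to an integer matrix, then a_i t₀ ∈ πℚ for every i. -/

import Mathlib

open Real Matrix

noncomputable def rot (t : ℝ) : Matrix (Fin 2) (Fin 2) ℝ :=
  !![Real.cos t, Real.sin t; -Real.sin t, Real.cos t]

lemma rot_zero : rot 0 = 1 := by
  simp [rot]; ext i j; fin_cases i <;> fin_cases j <;> simp

lemma rot_mul (t u : ℝ) : rot t * rot u = rot (t + u) := by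
  ext i j
  fin_cases i <;> fin_cases j <;>
    simp [rot, Matrix.mul_apply, Fin.sum_univ_two, Real.cos_add, Real.sin_add] <;> ring

lemma rot_pow (t : ℝ) (m : ℕ) : rot t ^ m = rot (m * t) := by
  induction m with
  | zero => simpa using rot_zero.symm
  | succ m ih => rw [pow_succ, ih, rot_mul, Nat.cast_succ]; ring_nf

lemma abs_rot_le (t : ℝ) (i j : Fin 2) : |rot t i j| ≤ 1 := by
  fin_cases i <;> fin_cases j <;>
    simp [rot, abs_cos_le_one, abs_sin_le_one, abs_neg]


/-- If the block diagonal matrix `Id_s ⊕ θ(a₁t₀) ⊕ ⋯ ⊕ θ(aₙt₀)` (all `aᵢ > 0`,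
`t₀ ≠ 0`) is conjugate over `ℝ` to an integer matrix, then every `aᵢt₀` is a rational
multiple of `π`. -/
theorem rot_blocks_rational_angles (s n : ℕ) (a : Fin n → ℝ) (ha : ∀ i, a i > 0)
    (t₀ : ℝ) (ht₀ : t₀ ≠ 0)
    (A : Matrix (Fin s ⊕ Fin 2 × Fin n) (Fin s ⊕ Fin 2 × Fin n) ℝ)
    (hA : A = Matrix.fromBlocks 1 0 0 (Matrix.blockDiagonal fun i => rot (a i * t₀)))
    (hconj : ∃ P : Matrix (Fin s ⊕ Fin 2 × Fin n) (Fin s ⊕ Fin 2 × Fin n) ℝ, IsUnit P ∧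
      ∃ E : Matrix (Fin s ⊕ Fin 2 × Fin n) (Fin s ⊕ Fin 2 × Fin n) ℤ,
        P⁻¹ * A * P = E.map (Int.cast : ℤ → ℝ)) :
    ∀ i : Fin n, ∃ q : ℚ, a i * t₀ = (q : ℝ) * π := by
  obtain ⟨P, hP, E, hE⟩ := hconj
  have hPd : IsUnit P.det := (Matrix.isUnit_iff_isUnit_det P).mp hP
  have hinv : P⁻¹ * P = 1 := Matrix.nonsing_inv_mul _ hPd
  have hinv' : P * P⁻¹ = 1 := Matrix.mul_nonsing_inv _ hPd
  -- powers of A in block form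
  have hApow : ∀ m : ℕ, A ^ m =
      Matrix.fromBlocks 1 0 0 (Matrix.blockDiagonal fun i => rot (m * (a i * t₀))) := by
    intro m
    induction m with
    | zero =>
      simp only [Nat.cast_zero, zero_mul, pow_zero, rot_zero]
      rw [show (fun _ : Fin n => (1 : Matrix (Fin 2) (Fin 2) ℝ)) = 1 from rfl,
        Matrix.blockDiagonal_one, Matrix.fromBlocks_one]
    | succ m ih =>
      have hbd : (Matrix.blockDiagonal fun i => rot (m * (a i * t₀))) *
          (Matrix.blockDiagonal fun i => rot (a i * t₀)) =
          Matrix.blockDiagonal fun i => rot ((m + 1 : ℕ) * (a i * t₀)) := by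
        have hf : (fun k : Fin n => rot (m * (a k * t₀)) * rot (a k * t₀)) =
            fun k : Fin n => rot ((m + 1 : ℕ) * (a k * t₀)) := by
          funext k
          rw [rot_mul, Nat.cast_succ]
          ring_nf
        rw [← Matrix.blockDiagonal_mul, hf]
      rw [pow_succ, ih, hA, Matrix.fromBlocks_multiply]
      simp [hbd]
  -- conjugate powers
  have hconjpow : ∀ m : ℕ, P⁻¹ * A ^ m * P = (E ^ m).map (Int.cast : ℤ → ℝ) := by
    intro m
    have h1 : ∀ m : ℕ, P⁻¹ * A ^ m * P = (P⁻¹ * A * P) ^ m := by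
      intro m
      induction m with
      | zero => simp [hinv]
      | succ m ih =>
        rw [pow_succ, pow_succ, ← ih]
        have : P⁻¹ * A ^ m * P * (P⁻¹ * A * P) = P⁻¹ * A ^ m * (P * P⁻¹) * (A * P) := by
          noncomm_ring
        rw [this, hinv']
        noncomm_ring
    rw [h1, hE]
    exact (((Int.castRingHom ℝ).mapMatrix : Matrix _ _ ℤ →+* Matrix _ _ ℝ).map_pow E m).symm
  -- entries of A^m are bounded by 1
  have hAbd : ∀ (m : ℕ) i j, |(A ^ m) i j| ≤ 1 := by
    intro m i j
    rw [hApow m]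
    rcases i with i | ⟨x, i⟩ <;> rcases j with j | ⟨y, j⟩
    · simp only [Matrix.fromBlocks_apply₁₁, Matrix.one_apply]
      split_ifs <;> simp
    · simp
    · simp
    · simp only [Matrix.fromBlocks_apply₂₂, Matrix.blockDiagonal_apply]
      split_ifs with h
      · exact abs_rot_le _ _ _
      · simp
  -- entries of E^m are bounded
  set c1 : ℝ := ∑ i, ∑ k, |P⁻¹ i k| with hc1
  set c2 : ℝ := ∑ l, ∑ j, |P l j| with hc2
  have hEbd : ∀ (m : ℕ) i j, |(((E ^ m) i j : ℤ) : ℝ)| ≤ c1 * c2 := by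
    intro m i j
    have hmap : (((E ^ m) i j : ℤ) : ℝ) = (P⁻¹ * A ^ m * P) i j := by
      rw [hconjpow m, Matrix.map_apply]
    rw [hmap]
    have step1 : |(P⁻¹ * A ^ m * P) i j| ≤ ∑ l, (∑ k, |P⁻¹ i k|) * |P l j| := by
      rw [Matrix.mul_apply]
      refine (Finset.abs_sum_le_sum_abs _ _).trans ?_
      apply Finset.sum_le_sum
      intro l _
      rw [abs_mul, Matrix.mul_apply]
      have h1 : |∑ k, P⁻¹ i k * (A ^ m) k l| ≤ ∑ k, |P⁻¹ i k| := by
        refine (Finset.abs_sum_le_sum_abs _ _).trans ?_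
        apply Finset.sum_le_sum
        intro k _
        rw [abs_mul]
        exact mul_le_of_le_one_right (abs_nonneg _) (hAbd m k l)
      exact mul_le_mul_of_nonneg_right h1 (abs_nonneg _)
    refine step1.trans ?_
    have h2 : ∑ l, (∑ k, |P⁻¹ i k|) * |P l j| = (∑ k, |P⁻¹ i k|) * ∑ l, |P l j| := by
      rw [Finset.mul_sum]
    rw [h2]
    have hr : ∑ k, |P⁻¹ i k| ≤ c1 :=
      Finset.single_le_sum (f := fun i' => ∑ k, |P⁻¹ i' k|)
        (fun i' _ => Finset.sum_nonneg fun _ _ => abs_nonneg _) (Finset.mem_univ i)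
    have hcnn : (0:ℝ) ≤ ∑ l, |P l j| := Finset.sum_nonneg fun _ _ => abs_nonneg _
    have hcj : ∑ l, |P l j| ≤ c2 := by
      rw [hc2, Finset.sum_comm]
      exact Finset.single_le_sum (f := fun j' => ∑ l, |P l j'|)
        (fun j' _ => Finset.sum_nonneg fun _ _ => abs_nonneg _) (Finset.mem_univ j)
    exact mul_le_mul hr hcj hcnn ((Finset.sum_nonneg fun _ _ =>
      Finset.sum_nonneg fun _ _ => abs_nonneg _))
  -- pigeonhole: two powers of E coincide
  set C : ℤ := ⌈c1 * c2⌉ with hC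
  have hmem : ∀ (m : ℕ) i j, (E ^ m) i j ∈ Finset.Icc (-C) C := by
    intro m i j
    have h := hEbd m i j
    rw [← Int.cast_abs] at h
    have : |(E ^ m) i j| ≤ C := by
      have := h.trans (Int.le_ceil _)
      exact_mod_cast this
    rw [Finset.mem_Icc]
    exact abs_le.mp this
  obtain ⟨k, l, hkl, hfe⟩ :=
    Finite.exists_ne_map_eq_of_infinite
      (fun m : ℕ => (fun i j => (⟨(E ^ m) i j, hmem m i j⟩ : Finset.Icc (-C) C) :
        (Fin s ⊕ Fin 2 × Fin n) → (Fin s ⊕ Fin 2 × Fin n) → Finset.Icc (-C) C))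
  have hEkl : (E ^ k) = (E ^ l) := by
    ext i j
    exact congrArg Subtype.val (congrFun (congrFun hfe i) j)
  have hcancel : ∀ M : Matrix (Fin s ⊕ Fin 2 × Fin n) (Fin s ⊕ Fin 2 × Fin n) ℝ,
      P * (P⁻¹ * M * P) * P⁻¹ = M := by
    intro M
    have h : P * (P⁻¹ * M * P) * P⁻¹ = (P * P⁻¹) * M * (P * P⁻¹) := by noncomm_ring
    rw [h, hinv']
    simp
  have hAkl : A ^ k = A ^ l := by
    have h : P⁻¹ * A ^ k * P = P⁻¹ * A ^ l * P := by
      rw [hconjpow k, hconjpow l, hEkl]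
    calc A ^ k = P * (P⁻¹ * A ^ k * P) * P⁻¹ := (hcancel _).symm
      _ = P * (P⁻¹ * A ^ l * P) * P⁻¹ := by rw [h]
      _ = A ^ l := hcancel _
  -- extract angle equality
  intro i
  set x : ℝ := a i * t₀ with hx
  have hcos : Real.cos (k * x) = Real.cos (l * x) := by
    have h := congrFun (congrFun (by rw [← hApow k, ← hApow l]; exact hAkl :
      (Matrix.fromBlocks 1 0 0 (Matrix.blockDiagonal fun i => rot (k * (a i * t₀))) :
        Matrix (Fin s ⊕ Fin 2 × Fin n) (Fin s ⊕ Fin 2 × Fin n) ℝ) =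
      Matrix.fromBlocks 1 0 0 (Matrix.blockDiagonal fun i => rot (l * (a i * t₀))))
      (Sum.inr ((0 : Fin 2), i))) (Sum.inr ((0 : Fin 2), i))
    simpa [Matrix.fromBlocks_apply₂₂, Matrix.blockDiagonal_apply, rot] using h
  have hsin : Real.sin (k * x) = Real.sin (l * x) := by
    have h := congrFun (congrFun (by rw [← hApow k, ← hApow l]; exact hAkl :
      (Matrix.fromBlocks 1 0 0 (Matrix.blockDiagonal fun i => rot (k * (a i * t₀))) :
        Matrix (Fin s ⊕ Fin 2 × Fin n) (Fin s ⊕ Fin 2 × Fin n) ℝ) =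
      Matrix.fromBlocks 1 0 0 (Matrix.blockDiagonal fun i => rot (l * (a i * t₀))))
      (Sum.inr ((0 : Fin 2), i))) (Sum.inr ((1 : Fin 2), i))
    simpa [Matrix.fromBlocks_apply₂₂, Matrix.blockDiagonal_apply, rot] using h
  have hexp : Complex.exp ((k * x : ℝ) * Complex.I) =
      Complex.exp ((l * x : ℝ) * Complex.I) := by
    rw [Complex.exp_mul_I, Complex.exp_mul_I, ← Complex.ofReal_cos, ← Complex.ofReal_sin,
      ← Complex.ofReal_cos, ← Complex.ofReal_sin, hcos, hsin]
  obtain ⟨N, hN⟩ := Complex.exp_eq_exp_iff_exists_int.mp hexp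
  have hreal : (k : ℝ) * x = l * x + 2 * π * N := by
    have h2 : (((k : ℝ) * x : ℝ) : ℂ) * Complex.I =
        (((l : ℝ) * x + 2 * π * N : ℝ) : ℂ) * Complex.I := by
      push_cast
      push_cast at hN
      linear_combination hN
    have h3 := mul_right_cancel₀ Complex.I_ne_zero h2
    exact_mod_cast h3
  have hkl' : (k : ℝ) ≠ l := by
    exact fun h => hkl (Nat.cast_injective h)
  refine ⟨2 * N / ((k : ℚ) - l), ?_⟩
  have hsub : (k : ℝ) - l ≠ 0 := sub_ne_zero.mpr hkl'
  have hcast : ((2 * N / ((k : ℚ) - l) : ℚ) : ℝ) = 2 * N / ((k : ℝ) - l) := by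
    push_cast
    ring
  rw [hcast, div_mul_eq_mul_div, eq_div_iff hsub]
  linear_combination hreal
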